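/- Let A and B be d-dimensional jointly Gaussian vectors with diagonal covariance matrices Σ_A and Σ_B, and cross-covariance matrix Σ_{A,B}. Let diag(Σ_{A,B}) denote the diagonal matrix with the same diagonal as Σ_{A,B}. Then det([[Σ_A, diag(Σ_{A,B})], [diag(Σ_{A,B}), Σ_B]]) ≥ det([[Σ_A, Σ_{A,B}], [Σ_{A,B}ᵀ, Σ_B]]). -/

import Mathlib

open MeasureTheory ProbabilityTheory Matrix

section Aux
variable {n : Type*} [Fintype n] [DecidableEq n]

lemma psd_det_nonneg {M : Matrix n n ℝ} (hM : M.PosSemidef) : 0 ≤ M.det := by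
  rw [hM.1.det_eq_prod_eigenvalues]
  exact Finset.prod_nonneg fun i _ => by simpa using hM.eigenvalues_nonneg i

lemma det_one_add_psd {Z : Matrix n n ℝ} (hZ : Z.PosSemidef) : 1 ≤ (1 + Z).det := by
  set U : Matrix n n ℝ := (hZ.1.eigenvectorUnitary : Matrix n n ℝ) with hU
  have h1 : U * star U = 1 := Matrix.mem_unitaryGroup_iff.mp hZ.1.eigenvectorUnitary.2
  have h2 : star U * U = 1 := Matrix.mem_unitaryGroup_iff'.mp hZ.1.eigenvectorUnitary.2
  have key : 1 + Z = U * (1 + diagonal (RCLike.ofReal ∘ hZ.1.eigenvalues)) * star U := by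
    rw [mul_add, add_mul, Matrix.mul_one, h1]
    congr 1
    exact hZ.1.spectral_theorem
  rw [key, det_mul, det_mul, mul_comm, ← mul_assoc, ← det_mul, h2, det_one, one_mul,
    ← diagonal_one, diagonal_add, det_diagonal]
  calc (1:ℝ) = ∏ _i : n, (1:ℝ) := by simp
    _ ≤ _ := Finset.prod_le_prod (fun _ _ => zero_le_one) fun i _ => by
        have := hZ.eigenvalues_nonneg i
        simp only [Pi.add_apply, Pi.one_apply, Function.comp_apply, RCLike.ofReal_real_eq_id,
          id_eq]
        linarith

lemma psd_det_add_le {X Y : Matrix n n ℝ} (hX : X.PosSemidef) (hY : Y.PosSemidef) :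
    X.det ≤ (X + Y).det := by
  by_cases h : X.det = 0
  · rw [h]; exact psd_det_nonneg (hX.add hY)
  · obtain ⟨R, hR, hRR⟩ : ∃ R : Matrix n n ℝ, R.PosSemidef ∧ R * R = X := by
      open scoped MatrixOrder in
      exact ⟨CFC.sqrt X, (CFC.sqrt_nonneg X).posSemidef, CFC.sqrt_mul_sqrt_self X hX.nonneg⟩
    have hdR : IsUnit R.det := by
      rw [isUnit_iff_ne_zero]
      intro h0
      exact h (by rw [← hRR, det_mul, h0, zero_mul])
    have hinv : R * R⁻¹ = 1 := mul_nonsing_inv _ hdR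
    have hinv' : R⁻¹ * R = 1 := nonsing_inv_mul _ hdR
    have hH : (R⁻¹)ᴴ = R⁻¹ := (hR.1.inv).eq
    have hZ : (R⁻¹ * Y * R⁻¹).PosSemidef := by
      have := hY.conjTranspose_mul_mul_same (R⁻¹)
      rwa [hH] at this
    have key : X + Y = R * (1 + R⁻¹ * Y * R⁻¹) * R := by
      rw [mul_add, add_mul, Matrix.mul_one, hRR]
      congr 1
      rw [← Matrix.mul_assoc, ← Matrix.mul_assoc, hinv, Matrix.one_mul, Matrix.mul_assoc, hinv',
        Matrix.mul_one]
    have h1 : 1 ≤ (1 + R⁻¹ * Y * R⁻¹).det := det_one_add_psd hZ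
    have hRnn : 0 ≤ R.det := psd_det_nonneg hR
    have hXd : X.det = R.det * R.det := by rw [← hRR, det_mul]
    rw [key, det_mul, det_mul, hXd]
    nlinarith

section Fischer2

variable {m : Type*} [Fintype m] [DecidableEq m]

lemma schur_psd {A : Matrix m m ℝ} {B : Matrix m n ℝ} {D : Matrix n n ℝ}
    (hA : A.IsHermitian) [Invertible A]
    (h : (fromBlocks A B Bᴴ D).PosSemidef) : (D - Bᴴ * A⁻¹ * B).PosSemidef := by
  rw [posSemidef_iff_dotProduct_mulVec]
  constructor
  · exact (Matrix.IsHermitian.fromBlocks₁₁ B D hA).mp h.1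
  · intro x
    have h2 := h.dotProduct_mulVec_nonneg (Sum.elim (-((A⁻¹ * B) *ᵥ x)) x)
    rw [dotProduct_mulVec, schur_complement_eq₁₁ B D _ _ hA, neg_add_cancel, dotProduct_zero,
      zero_add] at h2
    rw [dotProduct_mulVec]
    exact h2

lemma fischer {M : Matrix (m ⊕ n) (m ⊕ n) ℝ} (hM : M.PosSemidef) :
    M.det ≤ (M.toBlocks₁₁).det * (M.toBlocks₂₂).det := by
  set A := M.toBlocks₁₁ with hAdef
  set B := M.toBlocks₁₂ with hBdef
  set D := M.toBlocks₂₂ with hDdef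
  have hApsd : A.PosSemidef := hM.submatrix Sum.inl
  have hDpsd : D.PosSemidef := hM.submatrix Sum.inr
  have hC : M.toBlocks₂₁ = Bᴴ := by
    ext i j
    have := congrFun (congrFun hM.1 (Sum.inr i)) (Sum.inl j)
    simpa [conjTranspose_apply, hBdef, toBlocks₂₁, toBlocks₁₂] using this.symm
  have hMf : M = fromBlocks A B Bᴴ D := by
    rw [← hC, hAdef, hBdef, hDdef, fromBlocks_toBlocks]
  by_cases hU : IsUnit A.det
  · haveI := A.invertibleOfIsUnitDet hU
    have hS : (D - Bᴴ * A⁻¹ * B).PosSemidef := schur_psd hApsd.1 (hMf ▸ hM)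
    have hAinv : (A⁻¹).PosSemidef := by
      have := hApsd.conjTranspose_mul_mul_same (A⁻¹)
      rwa [hApsd.1.inv.eq, nonsing_inv_mul _ hU, Matrix.one_mul] at this
    have hconj : (Bᴴ * A⁻¹ * B).PosSemidef := hAinv.conjTranspose_mul_mul_same B
    have hDeq : D = (D - Bᴴ * A⁻¹ * B) + (Bᴴ * A⁻¹ * B) := (sub_add_cancel _ _).symm
    have hdet : M.det = A.det * (D - Bᴴ * A⁻¹ * B).det := by
      rw [hMf, det_fromBlocks₁₁, invOf_eq_nonsing_inv]
    rw [hdet]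
    refine mul_le_mul_of_nonneg_left ?_ (psd_det_nonneg hApsd)
    calc (D - Bᴴ * A⁻¹ * B).det ≤ ((D - Bᴴ * A⁻¹ * B) + (Bᴴ * A⁻¹ * B)).det :=
          psd_det_add_le hS hconj
      _ = D.det := by rw [← hDeq]
  · have hdA : A.det = 0 := by simpa [isUnit_iff_ne_zero] using hU
    obtain ⟨v, hv, hAv⟩ := (Matrix.exists_mulVec_eq_zero_iff).mpr hdA
    have hx : Sum.elim v (0 : n → ℝ) ≠ 0 := by
      intro h0
      exact hv (funext fun i => congrFun h0 (Sum.inl i))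
    have hMx : M *ᵥ Sum.elim v 0 = 0 := by
      rw [← hM.dotProduct_mulVec_zero_iff]
      rw [hMf, fromBlocks_mulVec, Function.star_sumElim, sumElim_dotProduct_sumElim]
      simp [hAv]
    have hdM : M.det = 0 := (Matrix.exists_mulVec_eq_zero_iff).mp ⟨_, hx, hMx⟩
    rw [hdM, hdA, zero_mul]


end Fischer2

open Sum in
/-- split off the `0`-th pair -/
def pairSplit (d : ℕ) : (Fin 1 ⊕ Fin 1) ⊕ (Fin d ⊕ Fin d) ≃ Fin (d + 1) ⊕ Fin (d + 1) where
  toFun := Sum.elim (Sum.elim (fun _ => inl 0) fun _ => inr 0)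
    (Sum.elim (fun j => inl j.succ) fun j => inr j.succ)
  invFun := Sum.elim
    (fun i => Fin.cases (inl (inl 0)) (fun j => inr (inl j)) i)
    (fun i => Fin.cases (inl (inr 0)) (fun j => inr (inr j)) i)
  left_inv := by
    rintro ((x | x) | (x | x)) <;> simp [Fin.fin_one_eq_zero]
  right_inv := by
    rintro (i | i) <;> exact Fin.cases rfl (fun j => by simp) i

open Sum in
lemma det_pair (P : Matrix (Fin 1 ⊕ Fin 1) (Fin 1 ⊕ Fin 1) ℝ) :
    P.det = P (inl 0) (inl 0) * P (inr 0) (inr 0) - P (inl 0) (inr 0) * P (inr 0) (inl 0) := by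
  let e : Fin 2 ≃ Fin 1 ⊕ Fin 1 :=
    { toFun := fun i => if i = 0 then inl 0 else inr 0
      invFun := Sum.elim (fun _ => 0) fun _ => 1
      left_inv := by decide
      right_inv := by decide }
  rw [← det_submatrix_equiv_self e, det_fin_two]
  simp [e]

open Sum in
lemma pair_hadamard : ∀ (d : ℕ) (M : Matrix (Fin d ⊕ Fin d) (Fin d ⊕ Fin d) ℝ),
    M.PosSemidef →
    (∀ i j : Fin d, i ≠ j → M (inl i) (inl j) = 0) →
    (∀ i j : Fin d, i ≠ j → M (inr i) (inr j) = 0) →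
    M.det ≤ ∏ i, (M (inl i) (inl i) * M (inr i) (inr i)
      - M (inl i) (inr i) * M (inr i) (inl i))
  | 0, M, _, _, _ => by simp
  | d + 1, M, hM, hA, hB => by
    set M' := M.submatrix (pairSplit d) (pairSplit d) with hM'def
    have hdet : M'.det = M.det := det_submatrix_equiv_self _ _
    have hM' : M'.PosSemidef := hM.submatrix _
    have hPpsd : (M'.toBlocks₁₁).PosSemidef := hM'.submatrix inl
    have hNpsd : (M'.toBlocks₂₂).PosSemidef := hM'.submatrix inr
    have hIH := pair_hadamard d M'.toBlocks₂₂ hNpsd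
      (fun i j hij => hA i.succ j.succ (by simpa using hij))
      (fun i j hij => hB i.succ j.succ (by simpa using hij))
    have hP : (M'.toBlocks₁₁).det = M (inl 0) (inl 0) * M (inr 0) (inr 0)
        - M (inl 0) (inr 0) * M (inr 0) (inl 0) := det_pair _
    calc M.det = M'.det := hdet.symm
      _ ≤ (M'.toBlocks₁₁).det * (M'.toBlocks₂₂).det := fischer hM'
      _ ≤ (M'.toBlocks₁₁).det * ∏ i : Fin d,
            (M (inl i.succ) (inl i.succ) * M (inr i.succ) (inr i.succ)
              - M (inl i.succ) (inr i.succ) * M (inr i.succ) (inl i.succ)) :=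
          mul_le_mul_of_nonneg_left hIH (psd_det_nonneg hPpsd)
      _ = ∏ i : Fin (d + 1), (M (inl i) (inl i) * M (inr i) (inr i)
            - M (inl i) (inr i) * M (inr i) (inl i)) := by
          rw [hP, Fin.prod_univ_succ]

open Sum in
lemma pair_block_det : ∀ (d : ℕ) (M : Matrix (Fin d ⊕ Fin d) (Fin d ⊕ Fin d) ℝ),
    (∀ i j : Fin d, i ≠ j → M (inl i) (inl j) = 0) →
    (∀ i j : Fin d, i ≠ j → M (inr i) (inr j) = 0) →
    (∀ i j : Fin d, i ≠ j → M (inl i) (inr j) = 0) →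
    (∀ i j : Fin d, i ≠ j → M (inr i) (inl j) = 0) →
    M.det = ∏ i, (M (inl i) (inl i) * M (inr i) (inr i)
      - M (inl i) (inr i) * M (inr i) (inl i))
  | 0, M, _, _, _, _ => by simp
  | d + 1, M, hA, hB, hC, hD => by
    set M' := M.submatrix (pairSplit d) (pairSplit d) with hM'def
    have hdet : M'.det = M.det := det_submatrix_equiv_self _ _
    have h12 : M'.toBlocks₁₂ = 0 := by
      ext x y
      rcases x with x | x <;> rcases y with y | y
      · exact hA 0 y.succ (Fin.succ_ne_zero y).symm
      · exact hC 0 y.succ (Fin.succ_ne_zero y).symm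
      · exact hD 0 y.succ (Fin.succ_ne_zero y).symm
      · exact hB 0 y.succ (Fin.succ_ne_zero y).symm
    have h21 : M'.toBlocks₂₁ = 0 := by
      ext x y
      rcases x with x | x <;> rcases y with y | y
      · exact hA x.succ 0 (Fin.succ_ne_zero x)
      · exact hC x.succ 0 (Fin.succ_ne_zero x)
      · exact hD x.succ 0 (Fin.succ_ne_zero x)
      · exact hB x.succ 0 (Fin.succ_ne_zero x)
    have hIH := pair_block_det d M'.toBlocks₂₂
      (fun i j hij => hA i.succ j.succ (by simpa using hij))
      (fun i j hij => hB i.succ j.succ (by simpa using hij))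
      (fun i j hij => hC i.succ j.succ (by simpa using hij))
      (fun i j hij => hD i.succ j.succ (by simpa using hij))
    have hP : (M'.toBlocks₁₁).det = M (inl 0) (inl 0) * M (inr 0) (inr 0)
        - M (inl 0) (inr 0) * M (inr 0) (inl 0) := det_pair _
    have hblocks : M' = fromBlocks M'.toBlocks₁₁ 0 0 M'.toBlocks₂₂ := by
      rw [← h12, ← h21, fromBlocks_toBlocks]
    calc M.det = M'.det := hdet.symm
      _ = (M'.toBlocks₁₁).det * (M'.toBlocks₂₂).det := by
          conv_lhs => rw [hblocks]
          rw [det_fromBlocks_zero₂₁]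
      _ = ∏ i : Fin (d + 1), (M (inl i) (inl i) * M (inr i) (inr i)
            - M (inl i) (inr i) * M (inr i) (inl i)) := by
          rw [Fin.prod_univ_succ, hP, hIH]; rfl

end Aux

/-- A random vector `X` is (multivariate) Gaussian with mean `m` and covariance matrix `S`
if every linear functional of `X` is a one-dimensional Gaussian. -/
def IsGaussianRV {Ω : Type*} [MeasurableSpace Ω] (P : Measure Ω)
    {ι : Type*} [Fintype ι] (X : Ω → ι → ℝ) (m : ι → ℝ) (S : Matrix ι ι ℝ) : Prop :=
  ∀ t : ι → ℝ,
    P.map (fun ω => ∑ i, t i * X ω i) =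
      gaussianReal (∑ i, t i * m i) (Real.toNNReal (∑ i, ∑ j, t i * S i j * t j))

/-- Let `A` and `B` be `d`-dimensional jointly Gaussian vectors with diagonal covariance
matrices `SA`, `SB` and cross-covariance matrix `SAB` (so the joint covariance matrix
`[[SA, SAB], [SABᵀ, SB]]` is positive semi-definite). Then replacing the off-diagonal block
`SAB` by the diagonal matrix `diag(SAB)` does not decrease the determinant:
`det [[SA, diag(SAB)], [diag(SAB), SB]] ≥ det [[SA, SAB], [SABᵀ, SB]]`. -/
theorem det_diag_offdiag_ge {Ω : Type*} [MeasurableSpace Ω]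
    (P : Measure Ω) [IsProbabilityMeasure P] {d : ℕ}
    (A B : Ω → Fin d → ℝ) (μA μB : Fin d → ℝ)
    (SA SB SAB : Matrix (Fin d) (Fin d) ℝ)
    (hSA : SA.IsDiag) (hSB : SB.IsDiag)
    (hjoint : IsGaussianRV P (fun ω => Sum.elim (A ω) (B ω)) (Sum.elim μA μB)
      (Matrix.fromBlocks SA SAB SABᵀ SB))
    (hpsd : (Matrix.fromBlocks SA SAB SABᵀ SB).PosSemidef) :
    (Matrix.fromBlocks SA SAB SABᵀ SB).det ≤
      (Matrix.fromBlocks SA (Matrix.diagonal fun i => SAB i i)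
        (Matrix.diagonal fun i => SAB i i) SB).det := by
  have h1 := pair_hadamard d (Matrix.fromBlocks SA SAB SABᵀ SB) hpsd
    (fun i j hij => hSA hij) (fun i j hij => hSB hij)
  have h2 := pair_block_det d (Matrix.fromBlocks SA (Matrix.diagonal fun i => SAB i i)
      (Matrix.diagonal fun i => SAB i i) SB)
    (fun i j hij => hSA hij) (fun i j hij => hSB hij)
    (fun i j hij => Matrix.diagonal_apply_ne _ hij)
    (fun i j hij => Matrix.diagonal_apply_ne _ hij)
  rw [h2]
  refine h1.trans (le_of_eq (Finset.prod_congr rfl fun i _ => ?_))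
  simp [Matrix.fromBlocks_apply₁₁, Matrix.fromBlocks_apply₁₂, Matrix.fromBlocks_apply₂₁,
    Matrix.fromBlocks_apply₂₂, Matrix.transpose_apply]
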